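/- Let 𝒜 ∈ ℝ^{n₁×⋯×n_d} be nonzero. The output (x₁⁰,…,x_d⁰) of Algorithm D (SVD-free: at each stage select the largest-norm row of the current unfolding, multiply, truncate, normalize) satisfies 𝒜(x₁⁰,…,x_d⁰) ≥ √(∏ⱼ rⱼ/∏ⱼ nⱼ) · ‖𝒜‖_F / √(∏_{j=1}^{d−1} n_j) ≥ √(∏ⱼ rⱼ/∏ⱼ nⱼ) · v_opt / √(∏_{j=1}^{d−1} n_j). -/

import Mathlib

open Finset

noncomputable def enorm' {ι : Type*} [Fintype ι] (x : ι → ℝ) : ℝ :=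
  Real.sqrt (∑ i, x i ^ 2)

def dot {ι : Type*} [Fintype ι] (x y : ι → ℝ) : ℝ := ∑ i, x i * y i

noncomputable def l0 {ι : Type*} [Fintype ι] (x : ι → ℝ) : ℕ :=
  (Finset.univ.filter fun i => x i ≠ 0).card

def IsTrunc {ι : Type*} [Fintype ι] [DecidableEq ι] (a : ι → ℝ) (r : ℕ) (ar : ι → ℝ) : Prop :=
  ∃ S : Finset ι, S.card = r ∧ (∀ i ∈ S, ar i = a i) ∧ (∀ i ∉ S, ar i = 0) ∧
    ∀ i ∈ S, ∀ j ∉ S, |a j| ≤ |a i|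

noncomputable def lmax {m n' : Type*} [Fintype m] [Fintype n'] (A : Matrix m n' ℝ) : ℝ :=
  sSup {c | ∃ x : n' → ℝ, enorm' x = 1 ∧ c = enorm' (A.mulVec x)}

noncomputable def fnorm {m n' : Type*} [Fintype m] [Fintype n'] (A : Matrix m n' ℝ) : ℝ :=
  Real.sqrt (∑ i, ∑ j, A i j ^ 2)

def tri {n1 n2 n3 : ℕ} (A : Fin n1 → Fin n2 → Fin n3 → ℝ)
    (x : Fin n1 → ℝ) (y : Fin n2 → ℝ) (z : Fin n3 → ℝ) : ℝ :=
  ∑ i, ∑ j, ∑ k, A i j k * x i * y j * z k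

def mlin {d : ℕ} {n : Fin d → ℕ} (A : (∀ j, Fin (n j)) → ℝ)
    (x : ∀ j, Fin (n j) → ℝ) : ℝ :=
  ∑ i, A i * ∏ j, x j (i j)

/-- Unfolding A_j of Algorithm D (cf. Remark 3.1): rows indexed by mode j,
columns by the modes k > j, with the modes k < j contracted against x_k. -/
def unf {d : ℕ} {n : Fin d → ℕ} (A : (∀ k, Fin (n k)) → ℝ)
    (x : ∀ k, Fin (n k) → ℝ) (j : Fin d) :
    Matrix (Fin (n j)) (∀ k : {k : Fin d // j < k}, Fin (n k.1)) ℝ :=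
  fun t q => ∑ i : ∀ k, Fin (n k), A i * ∏ k,
    (if k < j then x k (i k)
     else if h : j < k then (if i k = q ⟨k, h⟩ then (1 : ℝ) else 0)
     else (if (⟨k, i k⟩ : Σ m : Fin d, Fin (n m)) = ⟨j, t⟩ then 1 else 0))

/-- Contraction of 𝒜 with x_k on every mode except j; at the final stage
j = d this equals A_{d-1}ᵀ x_{d-1}⁰. -/
def cvec {d : ℕ} {n : Fin d → ℕ} (A : (∀ k, Fin (n k)) → ℝ)
    (x : ∀ k, Fin (n k) → ℝ) (j : Fin d) : Fin (n j) → ℝ :=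
  fun t => ∑ i : ∀ k, Fin (n k), A i * ∏ k,
    (if k = j then (if (⟨k, i k⟩ : Σ m : Fin d, Fin (n m)) = ⟨j, t⟩ then (1 : ℝ) else 0)
     else x k (i k))


set_option linter.unusedSectionVars false
set_option linter.unusedVariables false

section aux
variable {ι : Type*} [Fintype ι]

lemma enorm_nonneg (v : ι → ℝ) : 0 ≤ enorm' v := Real.sqrt_nonneg _

lemma sum_sq_nonneg (v : ι → ℝ) : 0 ≤ ∑ i, v i ^ 2 :=
  Finset.sum_nonneg fun i _ => sq_nonneg _

lemma enorm_sq (v : ι → ℝ) : enorm' v ^ 2 = ∑ i, v i ^ 2 :=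
  Real.sq_sqrt (sum_sq_nonneg v)

lemma enorm'_pos (v : ι → ℝ) (h : v ≠ 0) : 0 < enorm' v := by
  obtain ⟨i, hi⟩ := Function.ne_iff.1 h
  apply Real.sqrt_pos.2
  have hi' : v i ≠ 0 := hi
  have : 0 < v i ^ 2 := by positivity
  calc 0 < v i ^ 2 := this
    _ ≤ ∑ i, v i ^ 2 := Finset.single_le_sum (fun i _ => sq_nonneg (v i)) (mem_univ i)

lemma le_enorm (v : ι → ℝ) (i : ι) : v i ≤ enorm' v := by
  calc v i ≤ |v i| := le_abs_self _
    _ = Real.sqrt (v i ^ 2) := (Real.sqrt_sq_eq_abs _).symm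
    _ ≤ enorm' v := Real.sqrt_le_sqrt (Finset.single_le_sum (fun i _ => sq_nonneg (v i)) (mem_univ i))

lemma enorm_div (v : ι → ℝ) (c : ℝ) (hc : 0 ≤ c) :
    enorm' (fun i => v i / c) = enorm' v / c := by
  unfold enorm'
  rw [show (∑ i, (v i / c) ^ 2) = (∑ i, v i ^ 2) / c ^ 2 from by
    rw [Finset.sum_div]; exact Finset.sum_congr rfl fun i _ => by rw [div_pow],
    Real.sqrt_div (sum_sq_nonneg v), Real.sqrt_sq hc]

lemma dot_le_enorm_mul (u v : ι → ℝ) : dot u v ≤ enorm' u * enorm' v :=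
  Real.sum_mul_le_sqrt_mul_sqrt _ _ _

lemma dot_comm' (u v : ι → ℝ) : dot u v = dot v u := by
  unfold dot; exact Finset.sum_congr rfl fun i _ => mul_comm _ _

/-- a nonzero vector dotted with itself-normalized gives its norm -/
lemma dot_self_div (v : ι → ℝ) (h : enorm' v ≠ 0) :
    dot v (fun i => v i / enorm' v) = enorm' v := by
  unfold dot
  have : ∑ i, v i * (v i / enorm' v) = (∑ i, v i ^ 2) / enorm' v := by
    rw [Finset.sum_div]; exact Finset.sum_congr rfl fun i _ => by ring
  rw [this, ← enorm_sq v, sq]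
  field_simp

lemma IsTrunc.dot_eq [DecidableEq ι] (a ar : ι → ℝ) (r : ℕ) (h : IsTrunc a r ar) :
    dot a ar = enorm' ar ^ 2 := by
  obtain ⟨S, -, hS, hSc, -⟩ := h
  rw [enorm_sq]
  unfold dot
  refine Finset.sum_congr rfl fun i _ => ?_
  by_cases hi : i ∈ S
  · rw [hS i hi]; ring
  · rw [hSc i hi]; ring

lemma IsTrunc.enorm_le [DecidableEq ι] (a ar : ι → ℝ) (r : ℕ) (h : IsTrunc a r ar) :
    Real.sqrt r * enorm' a ≤ Real.sqrt (Fintype.card ι) * enorm' ar := by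
  obtain ⟨S, hcard, hS, hSc, hmax⟩ := h
  have key : (r : ℝ) * ∑ i, a i ^ 2 ≤ (Fintype.card ι : ℝ) * ∑ i, ar i ^ 2 := by
    have hsplit : ∑ i, a i ^ 2 = ∑ i ∈ S, a i ^ 2 + ∑ i ∈ Sᶜ, a i ^ 2 :=
      (Finset.sum_add_sum_compl S _).symm
    have har : ∑ i, ar i ^ 2 = ∑ i ∈ S, a i ^ 2 := by
      rw [← Finset.sum_add_sum_compl S (fun i => ar i ^ 2)]
      have h1 : ∑ i ∈ S, ar i ^ 2 = ∑ i ∈ S, a i ^ 2 :=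
        Finset.sum_congr rfl fun i hi => by rw [hS i hi]
      have h2 : ∑ i ∈ Sᶜ, ar i ^ 2 = 0 := by
        apply Finset.sum_eq_zero
        intro i hi
        rw [hSc i (Finset.mem_compl.1 hi)]; ring
      rw [h1, h2, add_zero]
    -- r * sum_{Sᶜ} a² ≤ Sᶜ.card * sum_S a²
    have hoff : (r : ℝ) * ∑ j ∈ Sᶜ, a j ^ 2 ≤ (Sᶜ.card : ℝ) * ∑ i ∈ S, a i ^ 2 := by
      have step : ∀ j ∈ Sᶜ, (r : ℝ) * a j ^ 2 ≤ ∑ i ∈ S, a i ^ 2 := by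
        intro j hj
        have hj' := Finset.mem_compl.1 hj
        calc (r : ℝ) * a j ^ 2 = ∑ _i ∈ S, a j ^ 2 := by
              rw [Finset.sum_const, hcard, nsmul_eq_mul]
          _ ≤ ∑ i ∈ S, a i ^ 2 := by
              apply Finset.sum_le_sum
              intro i hi
              have := hmax i hi j hj'
              calc a j ^ 2 = |a j| ^ 2 := (sq_abs _).symm
                _ ≤ |a i| ^ 2 := by
                   apply pow_le_pow_left₀ (abs_nonneg _) this
                _ = a i ^ 2 := sq_abs _
      calc (r : ℝ) * ∑ j ∈ Sᶜ, a j ^ 2 = ∑ j ∈ Sᶜ, (r : ℝ) * a j ^ 2 := Finset.mul_sum ..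
        _ ≤ ∑ _j ∈ Sᶜ, ∑ i ∈ S, a i ^ 2 := Finset.sum_le_sum step
        _ = (Sᶜ.card : ℝ) * ∑ i ∈ S, a i ^ 2 := by rw [Finset.sum_const, nsmul_eq_mul]
    have hcards : (r : ℝ) + Sᶜ.card = Fintype.card ι := by
      rw [← hcard]
      push_cast [← Finset.card_add_card_compl S]
      ring
    calc (r : ℝ) * ∑ i, a i ^ 2
        = (r:ℝ) * ∑ i ∈ S, a i ^ 2 + (r:ℝ) * ∑ i ∈ Sᶜ, a i ^ 2 := by rw [hsplit]; ring
      _ ≤ (r:ℝ) * ∑ i ∈ S, a i ^ 2 + (Sᶜ.card : ℝ) * ∑ i ∈ S, a i ^ 2 := by linarith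
      _ = (Fintype.card ι : ℝ) * ∑ i ∈ S, a i ^ 2 := by rw [← hcards]; ring
      _ = (Fintype.card ι : ℝ) * ∑ i, ar i ^ 2 := by rw [har]
  unfold enorm'
  rw [← Real.sqrt_mul (Nat.cast_nonneg r), ← Real.sqrt_mul (Nat.cast_nonneg (Fintype.card ι))]
  exact Real.sqrt_le_sqrt key

/-- max-norm row bounds the Frobenius norm -/
lemma fnorm_le_row {κ : Type*} [Fintype κ] (M : Matrix ι κ ℝ) (k : ι)
    (h : ∀ s, enorm' (M s) ≤ enorm' (M k)) :
    fnorm M ≤ Real.sqrt (Fintype.card ι) * enorm' (M k) := by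
  unfold fnorm
  have hrw : Real.sqrt (Fintype.card ι) * enorm' (M k)
      = Real.sqrt ((Fintype.card ι : ℝ) * enorm' (M k) ^ 2) := by
    rw [Real.sqrt_mul (Nat.cast_nonneg (Fintype.card ι)), Real.sqrt_sq (enorm_nonneg _)]
  rw [hrw]
  apply Real.sqrt_le_sqrt
  calc ∑ i, ∑ j, M i j ^ 2 = ∑ i : ι, enorm' (M i) ^ 2 := by
        exact Finset.sum_congr rfl fun i _ => (enorm_sq (M i)).symm
    _ ≤ ∑ _i : ι, enorm' (M k) ^ 2 := by
        apply Finset.sum_le_sum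
        intro i _
        exact pow_le_pow_left₀ (enorm_nonneg _) (h i) 2
    _ = (Fintype.card ι : ℝ) * enorm' (M k) ^ 2 := by
        rw [Finset.sum_const, nsmul_eq_mul, Finset.card_univ]

lemma fnorm_nonneg {κ : Type*} [Fintype κ] (M : Matrix ι κ ℝ) : 0 ≤ fnorm M :=
  Real.sqrt_nonneg _

end aux

section tensor

variable {d : ℕ} {n : Fin d → ℕ}

lemma sigma_ind (j : Fin d) (u v : Fin (n j)) :
    ((⟨j, u⟩ : Σ m : Fin d, Fin (n m)) = ⟨j, v⟩) ↔ u = v := by simp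

/-- split a pi type over `{k // j < k}` at its minimum `js` -/
def glueEquiv (j js : Fin d) (hjs : j < js) (hmin : ∀ k : Fin d, j < k → js ≤ k) :
    (∀ k : {k : Fin d // j < k}, Fin (n k.1)) ≃
      Fin (n js) × (∀ k : {k : Fin d // js < k}, Fin (n k.1)) where
  toFun q := (q ⟨js, hjs⟩, fun k => q ⟨k.1, lt_trans hjs k.2⟩)
  invFun tq := fun k =>
    if h : js < k.1 then tq.2 ⟨k.1, h⟩
    else Fin.cast (congrArg n (le_antisymm (hmin k.1 k.2) (not_lt.1 h))) tq.1
  left_inv q := by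
    funext k
    by_cases h : js < k.1
    · simp only [dif_pos h]
    · have e : k.1 = js := le_antisymm (not_lt.1 h) (hmin k.1 k.2)
      simp only [dif_neg h]
      obtain ⟨k1, hk⟩ := k
      dsimp only at e
      subst e
      exact Fin.ext rfl
  right_inv tq := by
    refine Prod.ext ?_ ?_
    · show (if h : js < js then _ else _) = tq.1
      rw [dif_neg (lt_irrefl js)]
      exact Fin.ext rfl
    · funext k
      show (if h : js < k.1 then tq.2 ⟨k.1, h⟩ else _) = tq.2 k
      rw [dif_pos k.2]

/-- split the full pi type at the minimal index `j0` -/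
def fullEquiv (j0 : Fin d) (hmin : ∀ k : Fin d, k ≠ j0 → j0 < k) :
    (∀ k, Fin (n k)) ≃ Fin (n j0) × (∀ k : {k : Fin d // j0 < k}, Fin (n k.1)) where
  toFun i := (i j0, fun k => i k.1)
  invFun tq := fun k =>
    if h : j0 < k then tq.2 ⟨k, h⟩
    else if hc : k = j0 then Fin.cast (congrArg n hc.symm) tq.1
    else absurd (hmin k hc) h
  left_inv i := by
    funext k
    by_cases h : j0 < k
    · simp only [dif_pos h]
    · by_cases hc : k = j0
      · subst hc
        simp only [dif_neg h, dif_pos rfl]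
        exact Fin.ext rfl
      · exact absurd (hmin k hc) h
  right_inv tq := by
    refine Prod.ext ?_ ?_
    · show (if h : j0 < j0 then _ else _) = tq.1
      rw [dif_neg (lt_irrefl j0), dif_pos rfl]
      exact Fin.ext rfl
    · funext k
      show (if h : j0 < k.1 then tq.2 ⟨k.1, h⟩ else _) = tq.2 k
      rw [dif_pos k.2]

variable (A : (∀ k, Fin (n k)) → ℝ) (x : ∀ k, Fin (n k) → ℝ)

/-- first unfolding is just a reshape of A -/
lemma unf_zero (j0 : Fin d) (hmin : ∀ k : Fin d, k ≠ j0 → j0 < k)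
    (t : Fin (n j0)) (q : ∀ k : {k : Fin d // j0 < k}, Fin (n k.1)) :
    unf A x j0 t q = A ((fullEquiv j0 hmin).symm (t, q)) := by
  set i0 := (fullEquiv j0 hmin).symm (t, q) with hi0
  have hi0v : ∀ k (h : j0 < k), i0 k = q ⟨k, h⟩ := by
    intro k h
    show (if h' : j0 < k then q ⟨k, h'⟩ else _) = q ⟨k, h⟩
    rw [dif_pos h]
  have hi0j : i0 j0 = t := by
    show (if h' : j0 < j0 then _ else _) = t
    rw [dif_neg (lt_irrefl j0), dif_pos rfl]
    exact Fin.ext rfl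
  have claim : ∀ i : ∀ k, Fin (n k),
      (∏ k, (if k < j0 then x k (i k)
        else if h : j0 < k then (if i k = q ⟨k, h⟩ then (1:ℝ) else 0)
        else (if (⟨k, i k⟩ : Σ m : Fin d, Fin (n m)) = ⟨j0, t⟩ then 1 else 0)))
      = if i = i0 then 1 else 0 := by
    intro i
    by_cases hii : i = i0
    · subst hii
      rw [if_pos rfl]
      apply Finset.prod_eq_one
      intro k _
      have hk0 : ¬ k < j0 := fun hlt => absurd (hmin k (ne_of_lt hlt)) (asymm hlt)
      by_cases h : j0 < k
      · rw [if_neg hk0, dif_pos h, if_pos (hi0v k h)]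
      · have e : k = j0 := le_antisymm (not_lt.1 h) (not_lt.1 hk0)
        subst e
        rw [if_neg hk0, dif_neg h, if_pos ((sigma_ind k (i0 k) t).2 hi0j)]
    · rw [if_neg hii]
      obtain ⟨k, hk⟩ := Function.ne_iff.1 hii
      apply Finset.prod_eq_zero (Finset.mem_univ k)
      have hk0 : ¬ k < j0 := fun hlt => absurd (hmin k (ne_of_lt hlt)) (asymm hlt)
      by_cases h : j0 < k
      · rw [if_neg hk0, dif_pos h, if_neg (by rw [← hi0v k h]; exact hk)]
      · have e : k = j0 := le_antisymm (not_lt.1 h) (not_lt.1 hk0)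
        subst e
        rw [if_neg hk0, dif_neg h,
          if_neg (fun hσ => hk (by rw [(sigma_ind k (i k) t).1 hσ, ← hi0j]))]
  have hu : unf A x j0 t q = ∑ i : ∀ k, Fin (n k), A i * (if i = i0 then 1 else 0) := by
    simp only [unf]
    exact Finset.sum_congr rfl fun i _ => by rw [claim i]
  rw [hu]
  simp only [mul_ite, mul_one, mul_zero]
  rw [Finset.sum_ite_eq' Finset.univ i0 A]
  simp

lemma fnorm_unf_zero (j0 : Fin d) (hmin : ∀ k : Fin d, k ≠ j0 → j0 < k) :
    fnorm (unf A x j0) = enorm' A := by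
  unfold fnorm enorm'
  congr 1
  rw [show (∑ i : (∀ k, Fin (n k)), A i ^ 2)
      = ∑ p : Fin (n j0) × (∀ k : {k : Fin d // j0 < k}, Fin (n k.1)),
          A ((fullEquiv j0 hmin).symm p) ^ 2 from
    (Equiv.sum_comp (fullEquiv j0 hmin).symm (fun i => A i ^ 2)).symm,
    Fintype.sum_prod_type]
  refine Finset.sum_congr rfl fun t _ => Finset.sum_congr rfl fun q _ => ?_
  rw [unf_zero A x j0 hmin t q]

end tensor

section tensor2

variable {d : ℕ} {n : Fin d → ℕ}
variable (A : (∀ k, Fin (n k)) → ℝ) (x : ∀ k, Fin (n k) → ℝ)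

/-- the (j+1)-st unfolding is the reshape of `A_jᵀ x_j` -/
lemma unf_succ (j js : Fin d) (hjs : j < js) (hmin : ∀ k : Fin d, j < k → js ≤ k)
    (t : Fin (n js)) (q' : ∀ k : {k : Fin d // js < k}, Fin (n k.1)) :
    unf A x js t q' =
      ∑ s, x j s * unf A x j s ((glueEquiv j js hjs hmin).symm (t, q')) := by
  set g := (glueEquiv j js hjs hmin).symm (t, q') with hgdef
  have hgq : ∀ (k : Fin d) (h1 : j < k) (h2 : js < k), g ⟨k, h1⟩ = q' ⟨k, h2⟩ := by
    intro k h1 h2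
    show (if h : js < k then q' ⟨k, h⟩ else _) = q' ⟨k, h2⟩
    rw [dif_pos h2]
  have hgt0 : g ⟨js, hjs⟩ = t := by
    show (if h : js < js then _ else _) = t
    rw [dif_neg (lt_irrefl js)]
    exact Fin.ext rfl
  simp only [unf]
  rw [eq_comm]
  -- swap the sums
  have swap : ∀ (P : (∀ k, Fin (n k)) → Fin (n j) → ℝ),
      (∑ s, x j s * ∑ i : ∀ k, Fin (n k), A i * P i s)
      = ∑ i : ∀ k, Fin (n k), A i * ∑ s, x j s * P i s := by
    intro P
    simp_rw [Finset.mul_sum]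
    rw [Finset.sum_comm]
    refine Finset.sum_congr rfl fun i _ => Finset.sum_congr rfl fun s _ => by ring
  rw [swap]
  refine Finset.sum_congr rfl fun i _ => ?_
  congr 1
  -- now the per-entry identity
  have hfac : ∀ s : Fin (n j),
      (∏ k, (if k < j then x k (i k)
        else if h : j < k then (if i k = g ⟨k, h⟩ then (1:ℝ) else 0)
        else (if (⟨k, i k⟩ : Σ m : Fin d, Fin (n m)) = ⟨j, s⟩ then 1 else 0)))
      = (if i j = s then 1 else 0) *
          ∏ k ∈ Finset.univ.erase j, (if k < j then x k (i k)
            else if h : j < k then (if i k = g ⟨k, h⟩ then (1:ℝ) else 0)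
            else (if (⟨k, i k⟩ : Σ m : Fin d, Fin (n m)) = ⟨j, s⟩ then 1 else 0)) := by
    intro s
    rw [← Finset.mul_prod_erase Finset.univ _ (Finset.mem_univ j)]
    congr 1
    rw [if_neg (lt_irrefl j), dif_neg (lt_irrefl j)]
    exact if_congr (sigma_ind j (i j) s) rfl rfl
  have herase : ∀ s : Fin (n j),
      (∏ k ∈ Finset.univ.erase j, (if k < j then x k (i k)
        else if h : j < k then (if i k = g ⟨k, h⟩ then (1:ℝ) else 0)
        else (if (⟨k, i k⟩ : Σ m : Fin d, Fin (n m)) = ⟨j, s⟩ then 1 else 0)))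
      = ∏ k ∈ Finset.univ.erase j, (if k < js then x k (i k)
          else if h : js < k then (if i k = q' ⟨k, h⟩ then (1:ℝ) else 0)
          else (if (⟨k, i k⟩ : Σ m : Fin d, Fin (n m)) = ⟨js, t⟩ then 1 else 0)) := by
    intro s
    refine Finset.prod_congr rfl fun k hk => ?_
    have hkj : k ≠ j := Finset.ne_of_mem_erase hk
    rcases lt_or_gt_of_ne hkj with hlt | hgt
    · rw [if_pos hlt, if_pos (lt_trans hlt hjs)]
    · by_cases h2 : js < k
      · rw [if_neg (asymm hgt), dif_pos hgt, if_neg (asymm h2), dif_pos h2,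
          hgq k hgt h2]
      · have e : k = js := le_antisymm (not_lt.1 h2) (hmin k hgt)
        subst e
        rw [if_neg (asymm hgt), dif_pos hgt, if_neg (lt_irrefl k), dif_neg (lt_irrefl k)]
        rw [show g ⟨k, hgt⟩ = t from hgt0]
        exact if_congr (sigma_ind k (i k) t).symm rfl rfl
  calc (∑ s, x j s * ∏ k, (if k < j then x k (i k)
        else if h : j < k then (if i k = g ⟨k, h⟩ then (1:ℝ) else 0)
        else (if (⟨k, i k⟩ : Σ m : Fin d, Fin (n m)) = ⟨j, s⟩ then 1 else 0)))
      = ∑ s, x j s * ((if i j = s then 1 else 0) *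
          ∏ k ∈ Finset.univ.erase j, (if k < js then x k (i k)
            else if h : js < k then (if i k = q' ⟨k, h⟩ then (1:ℝ) else 0)
            else (if (⟨k, i k⟩ : Σ m : Fin d, Fin (n m)) = ⟨js, t⟩ then 1 else 0))) := by
        refine Finset.sum_congr rfl fun s _ => ?_
        rw [hfac s, herase s]
    _ = x j (i j) * ∏ k ∈ Finset.univ.erase j, (if k < js then x k (i k)
            else if h : js < k then (if i k = q' ⟨k, h⟩ then (1:ℝ) else 0)
            else (if (⟨k, i k⟩ : Σ m : Fin d, Fin (n m)) = ⟨js, t⟩ then 1 else 0)) := by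
        simp only [mul_ite, mul_one, mul_zero, ite_mul, zero_mul, one_mul]
        rw [Finset.sum_ite_eq Finset.univ (i j)
          (fun s => x j s * ∏ k ∈ Finset.univ.erase j, (if k < js then x k (i k)
            else if h : js < k then (if i k = q' ⟨k, h⟩ then (1:ℝ) else 0)
            else (if (⟨k, i k⟩ : Σ m : Fin d, Fin (n m)) = ⟨js, t⟩ then 1 else 0)))]
        simp
    _ = ∏ k, (if k < js then x k (i k)
          else if h : js < k then (if i k = q' ⟨k, h⟩ then (1:ℝ) else 0)
          else (if (⟨k, i k⟩ : Σ m : Fin d, Fin (n m)) = ⟨js, t⟩ then 1 else 0)) := by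
        rw [← Finset.mul_prod_erase Finset.univ _ (Finset.mem_univ j)]
        congr 1
        rw [if_pos hjs]

end tensor2

section tensor3

variable {d : ℕ} {n : Fin d → ℕ}
variable (A : (∀ k, Fin (n k)) → ℝ) (x : ∀ k, Fin (n k) → ℝ)

lemma fnorm_unf_succ (j js : Fin d) (hjs : j < js) (hmin : ∀ k : Fin d, j < k → js ≤ k) :
    fnorm (unf A x js) =
      enorm' (fun qq : (∀ k : {k : Fin d // j < k}, Fin (n k.1)) =>
        ∑ s, x j s * unf A x j s qq) := by
  unfold fnorm enorm'
  congr 1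
  rw [show (∑ qq : (∀ k : {k : Fin d // j < k}, Fin (n k.1)),
        (∑ s, x j s * unf A x j s qq) ^ 2)
      = ∑ p : Fin (n js) × (∀ k : {k : Fin d // js < k}, Fin (n k.1)),
          (∑ s, x j s * unf A x j s ((glueEquiv j js hjs hmin).symm p)) ^ 2 from
    (Equiv.sum_comp (glueEquiv j js hjs hmin).symm
      (fun qq => (∑ s, x j s * unf A x j s qq) ^ 2)).symm,
    Fintype.sum_prod_type]
  refine Finset.sum_congr rfl fun t _ => Finset.sum_congr rfl fun q' _ => ?_
  rw [unf_succ A x j js hjs hmin t q']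

/-- at the last mode, the column type of `unf` is a singleton -/
lemma unf_last (last : Fin d) (hla : ∀ k : Fin d, k ≠ last → k < last)
    (t : Fin (n last)) (q : ∀ k : {k : Fin d // last < k}, Fin (n k.1)) :
    unf A x last t q = cvec A x last t := by
  simp only [unf, cvec]
  refine Finset.sum_congr rfl fun i _ => ?_
  congr 1
  refine Finset.prod_congr rfl fun k _ => ?_
  by_cases hc : k = last
  · subst hc
    rw [if_neg (lt_irrefl k), dif_neg (lt_irrefl k), if_pos rfl]
  · rw [if_pos (hla k hc), if_neg hc]

lemma fnorm_unf_last (last : Fin d) (hla : ∀ k : Fin d, k ≠ last → k < last) :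
    fnorm (unf A x last) = enorm' (cvec A x last) := by
  haveI hempty : IsEmpty {k : Fin d // last < k} :=
    ⟨fun k => absurd (hla k.1 (ne_of_gt k.2)) (asymm k.2)⟩
  unfold fnorm enorm'
  congr 1
  refine Finset.sum_congr rfl fun tt _ => ?_
  rw [Fintype.sum_unique (fun q => (unf A x last tt q) ^ 2)]
  rw [unf_last A x last hla]

end tensor3

section tensor4

variable {d : ℕ} {n : Fin d → ℕ}
variable (A : (∀ k, Fin (n k)) → ℝ) (x : ∀ k, Fin (n k) → ℝ)

lemma mlin_eq_dot (last : Fin d) (hla : ∀ k : Fin d, k ≠ last → k < last) :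
    mlin A x = dot (x last) (cvec A x last) := by
  unfold mlin dot cvec
  rw [eq_comm]
  have swap : ∀ (P : (∀ k, Fin (n k)) → Fin (n last) → ℝ),
      (∑ s, x last s * ∑ i : ∀ k, Fin (n k), A i * P i s)
      = ∑ i : ∀ k, Fin (n k), A i * ∑ s, x last s * P i s := by
    intro P
    simp_rw [Finset.mul_sum]
    rw [Finset.sum_comm]
    refine Finset.sum_congr rfl fun i _ => Finset.sum_congr rfl fun s _ => by ring
  rw [swap]
  refine Finset.sum_congr rfl fun i _ => ?_
  congr 1
  have hfac : ∀ s : Fin (n last),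
      (∏ k, (if k = last then
          (if (⟨k, i k⟩ : Σ m : Fin d, Fin (n m)) = ⟨last, s⟩ then (1:ℝ) else 0)
        else x k (i k)))
      = (if i last = s then (1:ℝ) else 0) * ∏ k ∈ Finset.univ.erase last, x k (i k) := by
    intro s
    rw [← Finset.mul_prod_erase Finset.univ _ (Finset.mem_univ last)]
    congr 1
    · rw [if_pos rfl]
      exact if_congr (sigma_ind last (i last) s) rfl rfl
    · refine Finset.prod_congr rfl fun k hk => ?_
      rw [if_neg (Finset.ne_of_mem_erase hk)]
  calc (∑ s, x last s * ∏ k, (if k = last then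
          (if (⟨k, i k⟩ : Σ m : Fin d, Fin (n m)) = ⟨last, s⟩ then (1:ℝ) else 0)
        else x k (i k)))
      = ∑ s, x last s * ((if i last = s then (1:ℝ) else 0) *
          ∏ k ∈ Finset.univ.erase last, x k (i k)) := by
        exact Finset.sum_congr rfl fun s _ => by rw [hfac s]
    _ = x last (i last) * ∏ k ∈ Finset.univ.erase last, x k (i k) := by
        simp only [mul_ite, mul_one, mul_zero, ite_mul, zero_mul, one_mul]
        rw [Finset.sum_ite_eq Finset.univ (i last)
          (fun s => x last s * ∏ k ∈ Finset.univ.erase last, x k (i k))]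
        simp
    _ = ∏ k, x k (i k) := Finset.mul_prod_erase Finset.univ (fun k => x k (i k)) (Finset.mem_univ last)

/-- bound on any feasible point: `mlin A y ≤ enorm' A` when all factors are unit -/
lemma mlin_le_enorm (y : ∀ k, Fin (n k) → ℝ) (hy : ∀ j, enorm' (y j) = 1) :
    mlin A y ≤ enorm' A := by
  have h1 : mlin A y ≤ enorm' A * enorm' (fun i : ∀ k, Fin (n k) => ∏ j, y j (i j)) :=
    dot_le_enorm_mul A _
  have h2 : enorm' (fun i : ∀ k, Fin (n k) => ∏ j, y j (i j)) = 1 := by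
    unfold enorm'
    rw [show (∑ i : ∀ k, Fin (n k), (∏ j, y j (i j)) ^ 2)
        = ∑ i : ∀ k, Fin (n k), ∏ j, (y j (i j)) ^ 2 from
      Finset.sum_congr rfl fun i _ => (Finset.prod_pow _ _ _).symm]
    rw [← Fintype.prod_sum (fun j s => (y j s) ^ 2)]
    have : ∀ j : Fin d, (∑ s, (y j s) ^ 2) = 1 := by
      intro j
      have := hy j
      unfold enorm' at this
      nlinarith [sum_sq_nonneg (y j), Real.sq_sqrt (sum_sq_nonneg (y j))]
    rw [Finset.prod_congr rfl fun j _ => this j]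
    simp
  rw [h2, mul_one] at h1
  exact h1

end tensor4

lemma sqrt_prod {ι : Type*} (s : Finset ι) (f : ι → ℝ) (hf : ∀ i ∈ s, 0 ≤ f i) :
    Real.sqrt (∏ i ∈ s, f i) = ∏ i ∈ s, Real.sqrt (f i) := by
  classical
  induction s using Finset.induction_on with
  | empty => simp
  | insert a s' hni ih =>
    rw [Finset.prod_insert hni, Finset.prod_insert hni,
      Real.sqrt_mul (hf a (Finset.mem_insert_self a s')),
      ih fun i hi => hf i (Finset.mem_insert_of_mem hi)]

lemma dot_div_right {ι : Type*} [Fintype ι] (u v : ι → ℝ) (c : ℝ) :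
    dot u (fun i => v i / c) = dot u v / c := by
  unfold dot
  rw [Finset.sum_div]
  exact Finset.sum_congr rfl fun i _ => by ring

/-- Theorem 3.6: approximation bound of Algorithm D (SVD-free: at each stage
select the largest-norm row of the current unfolding, multiply, truncate,
normalize). -/
theorem stmt_17 {d : ℕ} {n : Fin d → ℕ} (hd : 3 ≤ d)
    (A : (∀ k, Fin (n k)) → ℝ) (hA : A ≠ 0)
    (r : Fin d → ℕ) (hr : ∀ j, 1 ≤ r j ∧ r j ≤ n j)
    (last : Fin d) (hlast : (last : ℕ) = d - 1)
    (x xb : ∀ j, Fin (n j) → ℝ) (t : ∀ j, Fin (n j) → ℝ)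
    (kt : ∀ j, Fin (n j))
    (w : ∀ j, (∀ k : {k : Fin d // j < k}, Fin (n k.1)) → ℝ)
    -- steps 1-2: for j = 1,…,d-1, select the largest-norm row of A_j,
    -- normalize it to w_j, set x̄_j = A_j w_j and x_j⁰ its normalized
    -- r_j-truncation
    (hstep : ∀ j, j ≠ last →
      (∀ s, enorm' (unf A x j s) ≤ enorm' (unf A x j (kt j))) ∧
      w j = (fun q => unf A x j (kt j) q / enorm' (unf A x j (kt j))) ∧
      xb j = (unf A x j).mulVec (w j) ∧
      IsTrunc (xb j) (r j) (t j) ∧ x j = fun s => t j s / enorm' (t j))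
    -- step 3: x_d⁰ is the normalized r_d-truncation of A_{d-1}ᵀ x_{d-1}⁰
    (hlaststep : IsTrunc (cvec A x last) (r last) (t last) ∧
      x last = fun s => t last s / enorm' (t last)) :
    mlin A x ≥
        Real.sqrt ((∏ j, (r j : ℝ)) / ∏ j, (n j : ℝ)) *
          (enorm' A / Real.sqrt (∏ j ∈ Finset.univ.erase last, (n j : ℝ))) ∧
      ∀ y : ∀ j, Fin (n j) → ℝ, (∀ j, enorm' (y j) = 1 ∧ l0 (y j) ≤ r j) →
        Real.sqrt ((∏ j, (r j : ℝ)) / ∏ j, (n j : ℝ)) *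
          (mlin A y / Real.sqrt (∏ j ∈ Finset.univ.erase last, (n j : ℝ))) ≤
          mlin A x := by
  have hnpos : ∀ j, 0 < n j := fun j => lt_of_lt_of_le (hr j).1 (hr j).2
  have hnposR : ∀ j, (0:ℝ) < (n j : ℝ) := fun j => by exact_mod_cast hnpos j
  have hrposR : ∀ j, (0:ℝ) < (r j : ℝ) := fun j => by exact_mod_cast (hr j).1
  have hsqrtr_pos : ∀ j, 0 < Real.sqrt (r j) := fun j => Real.sqrt_pos.2 (hrposR j)
  have hsqrtn_pos : ∀ j, 0 < Real.sqrt (n j) := fun j => Real.sqrt_pos.2 (hnposR j)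
  have hla : ∀ k : Fin d, k ≠ last → k < last := by
    intro k hk
    have h1 : (k : ℕ) < d := k.isLt
    have h2 : (k : ℕ) ≠ (last : ℕ) := fun h => hk (Fin.ext h)
    rw [Fin.lt_def, hlast]
    omega
  have enormA_pos : 0 < enorm' A := enorm'_pos A hA
  -- the key inequality for a single step of the algorithm
  have step : ∀ (j js : Fin d), j ≠ last → (hjs : j < js) →
      (hmin : ∀ k, j < k → js ≤ k) → 0 < fnorm (unf A x j) →
      Real.sqrt (r j) * fnorm (unf A x j) ≤ (n j : ℝ) * fnorm (unf A x js) := by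
    intro j js hjne hjs hmin hpos
    obtain ⟨hmax, hw, hxb, htr, hx⟩ := hstep j hjne
    have h1 : fnorm (unf A x j) ≤ Real.sqrt (n j) * enorm' (unf A x j (kt j)) := by
      have := fnorm_le_row (unf A x j) (kt j) hmax
      rwa [Fintype.card_fin] at this
    have hrow_pos : 0 < enorm' (unf A x j (kt j)) := by
      by_contra hle
      have h0 : enorm' (unf A x j (kt j)) = 0 :=
        le_antisymm (not_lt.1 hle) (enorm_nonneg _)
      rw [h0, mul_zero] at h1
      linarith
    have hxbrow : xb j (kt j) = enorm' (unf A x j (kt j)) := by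
      have h2 : xb j (kt j) = dot (unf A x j (kt j)) (w j) := by rw [hxb]; rfl
      rw [h2, hw]
      exact dot_self_div _ (ne_of_gt hrow_pos)
    have hxb_ge : enorm' (unf A x j (kt j)) ≤ enorm' (xb j) :=
      hxbrow ▸ le_enorm (xb j) (kt j)
    have hxb_pos : 0 < enorm' (xb j) := lt_of_lt_of_le hrow_pos hxb_ge
    have htrnorm : Real.sqrt (r j) * enorm' (xb j) ≤ Real.sqrt (n j) * enorm' (t j) := by
      have := IsTrunc.enorm_le _ _ _ htr
      rwa [Fintype.card_fin] at this
    have ht_pos : 0 < enorm' (t j) := by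
      by_contra hle
      have h0 : enorm' (t j) = 0 := le_antisymm (not_lt.1 hle) (enorm_nonneg _)
      rw [h0, mul_zero] at htrnorm
      nlinarith [hsqrtr_pos j]
    have hdot : dot (xb j) (x j) = enorm' (t j) := by
      rw [hx, dot_div_right, IsTrunc.dot_eq _ _ _ htr, sq]
      field_simp
    have hwnorm : enorm' (w j) = 1 := by
      rw [hw, enorm_div _ _ (enorm_nonneg _)]
      exact div_self (ne_of_gt hrow_pos)
    have hswap : dot (xb j) (x j) =
        dot (w j) (fun qq => ∑ s, x j s * unf A x j s qq) := by
      rw [hxb]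
      unfold dot
      calc ∑ s, ((unf A x j).mulVec (w j)) s * x j s
          = ∑ s, ∑ q, (unf A x j s q * w j q) * x j s := by
            refine Finset.sum_congr rfl fun s _ => ?_
            simp [Matrix.mulVec, dotProduct, Finset.sum_mul]
        _ = ∑ q, ∑ s, (unf A x j s q * w j q) * x j s := Finset.sum_comm
        _ = ∑ q, w j q * (∑ s, x j s * unf A x j s q) := by
            refine Finset.sum_congr rfl fun q _ => ?_
            rw [Finset.mul_sum]
            exact Finset.sum_congr rfl fun s _ => by ring
    have hcs : dot (w j) (fun qq => ∑ s, x j s * unf A x j s qq) ≤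
        enorm' (fun qq : (∀ k : {k : Fin d // j < k}, Fin (n k.1)) =>
          ∑ s, x j s * unf A x j s qq) := by
      have := dot_le_enorm_mul (w j) (fun qq => ∑ s, x j s * unf A x j s qq)
      rwa [hwnorm, one_mul] at this
    have hvf : fnorm (unf A x js) =
        enorm' (fun qq : (∀ k : {k : Fin d // j < k}, Fin (n k.1)) =>
          ∑ s, x j s * unf A x j s qq) := fnorm_unf_succ A x j js hjs hmin
    have htv : enorm' (t j) ≤ fnorm (unf A x js) := by
      rw [hvf]
      calc enorm' (t j) = dot (xb j) (x j) := hdot.symm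
        _ = _ := hswap
        _ ≤ _ := hcs
    calc Real.sqrt (r j) * fnorm (unf A x j)
        ≤ Real.sqrt (r j) * (Real.sqrt (n j) * enorm' (unf A x j (kt j))) :=
          mul_le_mul_of_nonneg_left h1 (Real.sqrt_nonneg _)
      _ = Real.sqrt (n j) * (Real.sqrt (r j) * enorm' (unf A x j (kt j))) := by ring
      _ ≤ Real.sqrt (n j) * (Real.sqrt (r j) * enorm' (xb j)) := by
          have := mul_le_mul_of_nonneg_left hxb_ge (hsqrtr_pos j).le
          exact mul_le_mul_of_nonneg_left this (Real.sqrt_nonneg _)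
      _ ≤ Real.sqrt (n j) * (Real.sqrt (n j) * enorm' (t j)) :=
          mul_le_mul_of_nonneg_left htrnorm (Real.sqrt_nonneg _)
      _ = (n j : ℝ) * enorm' (t j) := by
          rw [← mul_assoc, Real.mul_self_sqrt (Nat.cast_nonneg _)]
      _ ≤ (n j : ℝ) * fnorm (unf A x js) :=
          mul_le_mul_of_nonneg_left htv (Nat.cast_nonneg _)
  -- the induction along the modes
  have cpos : ∀ s : Finset (Fin d),
      0 < ∏ jj ∈ s, (Real.sqrt (r jj) / (n jj : ℝ)) :=
    fun s => Finset.prod_pos fun jj _ => div_pos (hsqrtr_pos jj) (hnposR jj)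
  have main : ∀ m : ℕ, ∀ hm : m < d, m ≤ (last : ℕ) →
      (∏ jj ∈ Finset.univ.filter (fun jj : Fin d => (jj : ℕ) < m),
        (Real.sqrt (r jj) / (n jj : ℝ))) * enorm' A ≤ fnorm (unf A x ⟨m, hm⟩) := by
    intro m
    induction m with
    | zero =>
      intro hm _
      have hf : Finset.univ.filter (fun jj : Fin d => (jj : ℕ) < 0) = ∅ := by
        apply Finset.filter_false_of_mem
        intro jj _
        omega
      rw [hf, Finset.prod_empty, one_mul]
      have hmin0 : ∀ k : Fin d, k ≠ (⟨0, hm⟩ : Fin d) → (⟨0, hm⟩ : Fin d) < k := by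
        intro k hk
        have h0 : (k : ℕ) ≠ 0 := fun h => hk (Fin.ext h)
        show (0 : ℕ) < (k : ℕ)
        exact Nat.pos_of_ne_zero h0
      rw [fnorm_unf_zero A x ⟨0, hm⟩ hmin0]
    | succ m ih =>
      intro hm1 hmle
      have hmd : m < d := by omega
      have hjne : (⟨m, hmd⟩ : Fin d) ≠ last := by
        intro h
        have := congrArg Fin.val h
        simp at this
        omega
      have hjs : (⟨m, hmd⟩ : Fin d) < (⟨m + 1, hm1⟩ : Fin d) :=
        Fin.mk_lt_mk.2 (Nat.lt_succ_self m)
      have hmin : ∀ k : Fin d, (⟨m, hmd⟩ : Fin d) < k → (⟨m + 1, hm1⟩ : Fin d) ≤ k := by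
        intro k hk
        have hk' : m < (k : ℕ) := hk
        show m + 1 ≤ (k : ℕ)
        omega
      have ihm := ih hmd (by omega)
      have hpos : 0 < fnorm (unf A x ⟨m, hmd⟩) :=
        lt_of_lt_of_le (mul_pos (cpos _) enormA_pos) ihm
      have hstep' := step ⟨m, hmd⟩ ⟨m + 1, hm1⟩ hjne hjs hmin hpos
      have hins : Finset.univ.filter (fun jj : Fin d => (jj : ℕ) < m + 1) =
          insert (⟨m, hmd⟩ : Fin d) (Finset.univ.filter (fun jj : Fin d => (jj : ℕ) < m)) := by
        ext jj
        simp only [Finset.mem_filter, Finset.mem_univ, true_and, Finset.mem_insert,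
          Fin.ext_iff]
        omega
      have hnot : (⟨m, hmd⟩ : Fin d) ∉
          Finset.univ.filter (fun jj : Fin d => (jj : ℕ) < m) := by
        simp
      calc (∏ jj ∈ Finset.univ.filter (fun jj : Fin d => (jj : ℕ) < m + 1),
            (Real.sqrt (r jj) / (n jj : ℝ))) * enorm' A
          = (Real.sqrt (r ⟨m, hmd⟩) / (n ⟨m, hmd⟩ : ℝ)) *
            ((∏ jj ∈ Finset.univ.filter (fun jj : Fin d => (jj : ℕ) < m),
              (Real.sqrt (r jj) / (n jj : ℝ))) * enorm' A) := by
            rw [hins, Finset.prod_insert hnot]; ring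
        _ ≤ (Real.sqrt (r ⟨m, hmd⟩) / (n ⟨m, hmd⟩ : ℝ)) * fnorm (unf A x ⟨m, hmd⟩) :=
            mul_le_mul_of_nonneg_left ihm
              (div_nonneg (Real.sqrt_nonneg _) (Nat.cast_nonneg _))
        _ ≤ fnorm (unf A x ⟨m + 1, hm1⟩) := by
            rw [div_mul_eq_mul_div, div_le_iff₀ (hnposR _)]
            linarith [hstep']
  -- conclusion at the last mode
  have hlast_lt : (last : ℕ) < d := last.isLt
  have hfe : Finset.univ.filter (fun jj : Fin d => (jj : ℕ) < (last : ℕ)) =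
      Finset.univ.erase last := by
    ext jj
    simp only [Finset.mem_filter, Finset.mem_univ, true_and, Finset.mem_erase, and_true]
    constructor
    · intro h
      intro he
      rw [he] at h
      omega
    · intro h
      have h2 : (jj : ℕ) ≠ (last : ℕ) := fun he => h (Fin.ext he)
      have := jj.isLt
      omega
  have hmainlast := main (last : ℕ) hlast_lt le_rfl
  rw [hfe] at hmainlast
  have hlasteq : (⟨(last : ℕ), hlast_lt⟩ : Fin d) = last := Fin.ext rfl
  rw [hlasteq] at hmainlast
  rw [fnorm_unf_last A x last hla] at hmainlast
  -- final truncation step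
  obtain ⟨htrl, hxl⟩ := hlaststep
  have hcv_pos : 0 < enorm' (cvec A x last) :=
    lt_of_lt_of_le (mul_pos (cpos _) enormA_pos) hmainlast
  have htl : Real.sqrt (r last) * enorm' (cvec A x last) ≤
      Real.sqrt (n last) * enorm' (t last) := by
    have := IsTrunc.enorm_le _ _ _ htrl
    rwa [Fintype.card_fin] at this
  have htl_pos : 0 < enorm' (t last) := by
    by_contra hle
    have h0 : enorm' (t last) = 0 := le_antisymm (not_lt.1 hle) (enorm_nonneg _)
    rw [h0, mul_zero] at htl
    nlinarith [hsqrtr_pos last]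
  have hmlin : mlin A x = enorm' (t last) := by
    rw [mlin_eq_dot A x last hla, dot_comm', hxl, dot_div_right,
      IsTrunc.dot_eq _ _ _ htrl, sq]
    field_simp
  -- the constants
  have hPn'_pos : (0:ℝ) < ∏ jj ∈ Finset.univ.erase last, (n jj : ℝ) :=
    Finset.prod_pos fun jj _ => hnposR jj
  have hconst : Real.sqrt ((∏ j, (r j : ℝ)) / ∏ j, (n j : ℝ)) /
        Real.sqrt (∏ j ∈ Finset.univ.erase last, (n j : ℝ)) =
      (Real.sqrt (r last) / Real.sqrt (n last)) *
        ∏ jj ∈ Finset.univ.erase last, (Real.sqrt (r jj) / (n jj : ℝ)) := by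
    have hprodr : ∏ j, (r j : ℝ) = (r last : ℝ) * ∏ jj ∈ Finset.univ.erase last, (r jj : ℝ) :=
      (Finset.mul_prod_erase Finset.univ _ (Finset.mem_univ last)).symm
    have hprodn : ∏ j, (n j : ℝ) = (n last : ℝ) * ∏ jj ∈ Finset.univ.erase last, (n jj : ℝ) :=
      (Finset.mul_prod_erase Finset.univ _ (Finset.mem_univ last)).symm
    have hr_nonneg : (0:ℝ) ≤ ∏ j, (r j : ℝ) :=
      Finset.prod_nonneg fun _ _ => Nat.cast_nonneg _
    rw [Real.sqrt_div hr_nonneg, hprodr, hprodn,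
      Real.sqrt_mul (Nat.cast_nonneg _), Real.sqrt_mul (Nat.cast_nonneg _),
      Finset.prod_div_distrib, ← sqrt_prod _ _ (fun _ _ => Nat.cast_nonneg _)]
    rw [div_div]
    rw [show Real.sqrt (n last) * Real.sqrt (∏ jj ∈ Finset.univ.erase last, (n jj : ℝ)) *
        Real.sqrt (∏ jj ∈ Finset.univ.erase last, (n jj : ℝ)) =
        Real.sqrt (n last) * (∏ jj ∈ Finset.univ.erase last, (n jj : ℝ)) from by
      rw [mul_assoc, Real.mul_self_sqrt hPn'_pos.le]]
    rw [div_mul_div_comm]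
  -- part 1
  have part1 : mlin A x ≥
      Real.sqrt ((∏ j, (r j : ℝ)) / ∏ j, (n j : ℝ)) *
        (enorm' A / Real.sqrt (∏ j ∈ Finset.univ.erase last, (n j : ℝ))) := by
    have hrw : Real.sqrt ((∏ j, (r j : ℝ)) / ∏ j, (n j : ℝ)) *
        (enorm' A / Real.sqrt (∏ j ∈ Finset.univ.erase last, (n j : ℝ))) =
      (Real.sqrt (r last) / Real.sqrt (n last)) *
        ((∏ jj ∈ Finset.univ.erase last, (Real.sqrt (r jj) / (n jj : ℝ))) * enorm' A) := by
      rw [← mul_assoc, ← hconst]; ring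
    rw [hrw, hmlin]
    calc (Real.sqrt (r last) / Real.sqrt (n last)) *
          ((∏ jj ∈ Finset.univ.erase last, (Real.sqrt (r jj) / (n jj : ℝ))) * enorm' A)
        ≤ (Real.sqrt (r last) / Real.sqrt (n last)) * enorm' (cvec A x last) :=
          mul_le_mul_of_nonneg_left hmainlast
            (div_nonneg (Real.sqrt_nonneg _) (Real.sqrt_nonneg _))
      _ ≤ enorm' (t last) := by
          rw [div_mul_eq_mul_div, div_le_iff₀ (hsqrtn_pos last)]
          linarith [htl]
  refine ⟨part1, ?_⟩
  -- part 2
  intro y hy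
  have hyb : mlin A y ≤ enorm' A := mlin_le_enorm A y (fun j => (hy j).1)
  have hsq : 0 ≤ Real.sqrt ((∏ j, (r j : ℝ)) / ∏ j, (n j : ℝ)) := Real.sqrt_nonneg _
  have hsPn' : 0 < Real.sqrt (∏ j ∈ Finset.univ.erase last, (n j : ℝ)) :=
    Real.sqrt_pos.2 hPn'_pos
  calc Real.sqrt ((∏ j, (r j : ℝ)) / ∏ j, (n j : ℝ)) *
        (mlin A y / Real.sqrt (∏ j ∈ Finset.univ.erase last, (n j : ℝ)))
      ≤ Real.sqrt ((∏ j, (r j : ℝ)) / ∏ j, (n j : ℝ)) *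
        (enorm' A / Real.sqrt (∏ j ∈ Finset.univ.erase last, (n j : ℝ))) :=
        by gcongr
    _ ≤ mlin A x := part1
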